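/- Let a be a prime with a ≡ 1 (mod 8). Then the set of primes β with β ≡ 3 (mod 4) and Legendre symbol (a/β) = -1 is infinite, and moreover it contains at least one prime β with β < a. -/

import Mathlib

/-- Any natural number `≡ 3 (mod 4)` has a prime factor `≡ 3 (mod 4)`. -/
theorem teege_aux_prime_factor : ∀ n : ℕ, n % 4 = 3 → ∃ p : ℕ, p.Prime ∧ p ∣ n ∧ p % 4 = 3 := by
  intro n
  induction n using Nat.strong_induction_on with
  | _ n ih =>
    intro hn
    have hn1 : n ≠ 1 := by omega
    obtain ⟨p, pp, pd⟩ := Nat.exists_prime_and_dvd hn1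
    have hp2 : p ≠ 2 := by
      rintro rfl
      obtain ⟨k, rfl⟩ := pd
      omega
    have hpodd : p % 2 = 1 := pp.eq_two_or_odd.resolve_left hp2
    have hp4 : p % 4 = 1 ∨ p % 4 = 3 := by omega
    rcases hp4 with hp4 | hp4
    · obtain ⟨m, rfl⟩ := pd
      have hm0 : m ≠ 0 := by rintro rfl; simp at hn
      have hmlt : m < p * m := by
        have := pp.two_le
        calc m = 1 * m := (one_mul m).symm
        _ < p * m := by
          apply Nat.mul_lt_mul_of_lt_of_le (by omega) le_rfl (by omega)
      have hmm : (p * m) % 4 = p % 4 * (m % 4) % 4 := Nat.mul_mod p m 4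
      rw [hp4] at hmm
      have hm4 : m % 4 = 3 := by omega
      obtain ⟨q, hq, hqd, hq4⟩ := ih m hmlt hm4
      exact ⟨q, hq, hqd.trans (dvd_mul_left m p), hq4⟩
    · exact ⟨p, pp, pd, hp4⟩

/-- Descent: from any prime `q ≡ 3 (mod 4)` with `(a/q) = -1`, we can find such a
prime below `a`. -/
theorem teege_descent (a : ℕ) (ha : a.Prime) (ha8 : a % 8 = 1) :
    ∀ q : ℕ, ∀ hq : q.Prime, q % 4 = 3 → @legendreSym q ⟨hq⟩ (a : ℤ) = -1 →
      ∃ β : ℕ, ∃ hβ : β.Prime, β % 4 = 3 ∧ @legendreSym β ⟨hβ⟩ (a : ℤ) = -1 ∧ β < a := by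
  intro q
  induction q using Nat.strong_induction_on with
  | _ q ih =>
    intro hq hq4 hleg
    haveI : Fact q.Prime := ⟨hq⟩
    by_cases hqa : q < a
    · exact ⟨q, hq, hq4, hleg, hqa⟩
    · have ha4 : a % 4 = 1 := by omega
      have haq : a < q := lt_of_le_of_ne (not_lt.mp hqa) (by intro h; omega)
      have hq2 : q ≠ 2 := by omega
      -- `-a` is a square mod `q`
      have hnegleg : @legendreSym q ⟨hq⟩ (-(a : ℤ)) = 1 := by
        have h1 : (-(a : ℤ)) = (-1) * (a : ℤ) := by ring
        rw [h1, legendreSym.mul, legendreSym.at_neg_one hq2, ZMod.χ₄_nat_three_mod_four hq4,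
          hleg]
        ring
      have hazn : ((a : ℕ) : ZMod q) ≠ 0 := by
        intro h
        have h' : ((a : ℤ) : ZMod q) = 0 := by push_cast at h ⊢; exact h
        have := (legendreSym.eq_zero_iff q (a : ℤ)).mpr h'
        omega
      have hnegz : (((-(a : ℤ)) : ℤ) : ZMod q) ≠ 0 := by
        push_cast
        simpa using hazn
      have hsq : IsSquare (((-(a : ℤ)) : ℤ) : ZMod q) :=
        (legendreSym.eq_one_iff q hnegz).mp hnegleg
      obtain ⟨y, hy⟩ := hsq
      -- find a small square root `w`
      obtain ⟨w, hw2, hwsq⟩ : ∃ w : ℕ, 2 * w ≤ q ∧ ((w : ℕ) : ZMod q) ^ 2 = y * y := by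
        have hyval : y.val < q := ZMod.val_lt y
        rcases le_total y.val (q - y.val) with h1 | h1
        · refine ⟨y.val, by omega, ?_⟩
          rw [ZMod.natCast_rightInverse y]
          ring
        · refine ⟨q - y.val, by omega, ?_⟩
          have h2 : ((q - y.val : ℕ) : ZMod q) = (q : ZMod q) - (y.val : ZMod q) := by
            rw [Nat.cast_sub hyval.le]
          rw [h2, ZMod.natCast_self, ZMod.natCast_rightInverse y, zero_sub]
          ring
      set N := w ^ 2 + a with hN
      have hqN : q ∣ N := by
        have h0 : ((N : ℕ) : ZMod q) = 0 := by
          rw [hN]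
          push_cast at hy ⊢
          rw [hwsq, ← hy]
          ring
        exact (ZMod.natCast_eq_zero_iff N q).mp h0
      have ha9 : 9 ≤ a := by have := ha.two_le; omega
      have hNlt : N < q * q := by
        have h1 : 4 * (w * w) ≤ q * q := by
          calc 4 * (w * w) = (2 * w) * (2 * w) := by ring
          _ ≤ q * q := Nat.mul_le_mul hw2 hw2
        have h5 : 4 * q ≤ q * q := Nat.mul_le_mul_right q (by omega)
        rw [hN, pow_two]
        omega
      obtain ⟨M, hqM⟩ := hqN
      have hMq : M < q := by
        rcases Nat.lt_or_ge M q with h | h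
        · exact h
        · exfalso
          have h2 : q * q ≤ q * M := Nat.mul_le_mul_left q h
          omega
      -- find a prime q' ≡ 3 mod 4 dividing N, with q' < q
      obtain ⟨q', hq', hq'q, hq'N⟩ :
          ∃ q' : ℕ, (q'.Prime ∧ q' % 4 = 3) ∧ q' < q ∧ q' ∣ N := by
        rcases Nat.even_or_odd w with he | ho
        · -- w even : N ≡ 1 (mod 4), so M ≡ 3 (mod 4)
          obtain ⟨u, hu⟩ := he
          have hN4 : (q * M) % 4 = 1 := by
            obtain ⟨s, hs⟩ : ∃ s, N = 4 * s + a := ⟨u * u, by rw [hN, hu]; ring⟩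
            omega
          have hmm : q * M % 4 = q % 4 * (M % 4) % 4 := Nat.mul_mod q M 4
          rw [hq4] at hmm
          have hM4 : M % 4 = 3 := by omega
          obtain ⟨p', hp', hp'M, hp'4⟩ := teege_aux_prime_factor M hM4
          refine ⟨p', ⟨hp', hp'4⟩, ?_, hp'M.trans ⟨q, by rw [hqM]; ring⟩⟩
          exact lt_of_le_of_lt (Nat.le_of_dvd (by omega) hp'M) hMq
        · -- w odd : N ≡ 2 (mod 8), so M = 2 M₁ with M₁ ≡ 3 (mod 4)
          obtain ⟨u, hu⟩ := ho
          have hN8 : (q * M) % 8 = 2 := by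
            obtain ⟨s, hs, hs2⟩ : ∃ s, N = 4 * s + 1 + a ∧ s % 2 = 0 :=
              ⟨u * (u + 1), by rw [hN, hu]; ring,
                Nat.even_iff.mp (Nat.even_mul_succ_self u)⟩
            omega
          have hqodd : q % 2 = 1 := by omega
          have hM2 : M % 2 = 0 := by
            have h1 : q * M % 2 = q % 2 * (M % 2) % 2 := Nat.mul_mod q M 2
            rw [hqodd] at h1
            omega
          obtain ⟨M1, hM1⟩ : ∃ M1, M = 2 * M1 := ⟨M / 2, by omega⟩
          have hX : (q * M1) % 4 = 1 := by
            have h5 : q * M = 2 * (q * M1) := by rw [hM1]; ring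
            omega
          have hmm : q * M1 % 4 = q % 4 * (M1 % 4) % 4 := Nat.mul_mod q M1 4
          rw [hq4] at hmm
          have hM14 : M1 % 4 = 3 := by omega
          obtain ⟨p', hp', hp'M, hp'4⟩ := teege_aux_prime_factor M1 hM14
          have hM1M : M1 ∣ M := ⟨2, by omega⟩
          refine ⟨p', ⟨hp', hp'4⟩, ?_, (hp'M.trans hM1M).trans ⟨q, by rw [hqM]; ring⟩⟩
          calc p' ≤ M1 := Nat.le_of_dvd (by omega) hp'M
          _ ≤ M := by omega
          _ < q := hMq
      obtain ⟨hq'p, hq'4⟩ := hq'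
      haveI : Fact q'.Prime := ⟨hq'p⟩
      have hq'2 : q' ≠ 2 := by omega
      -- a is not divisible by q'
      have haq' : ¬ q' ∣ a := by
        intro hd
        have := (Nat.prime_dvd_prime_iff_eq hq'p ha).mp hd
        omega
      have haz' : ((a : ℕ) : ZMod q') ≠ 0 := by
        rwa [Ne, ZMod.natCast_eq_zero_iff]
      -- -a is a square mod q'
      have hcast : ((w : ℕ) : ZMod q') ^ 2 = -((a : ℕ) : ZMod q') := by
        have h0 : ((N : ℕ) : ZMod q') = 0 := (ZMod.natCast_eq_zero_iff N q').mpr hq'N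
        rw [hN] at h0
        push_cast at h0
        linear_combination h0
      have hne' : (((-(a : ℤ)) : ℤ) : ZMod q') ≠ 0 := by
        push_cast
        simpa using haz'
      have hsq' : IsSquare (((-(a : ℤ)) : ℤ) : ZMod q') := by
        refine ⟨((w : ℕ) : ZMod q'), ?_⟩
        push_cast
        rw [← hcast]
        ring
      have hleg1 : @legendreSym q' ⟨hq'p⟩ (-(a : ℤ)) = 1 :=
        (legendreSym.eq_one_iff q' hne').mpr hsq'
      have hlegq' : @legendreSym q' ⟨hq'p⟩ (a : ℤ) = -1 := by
        have h1 : (a : ℤ) = (-1) * (-(a : ℤ)) := by ring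
        rw [h1, legendreSym.mul, legendreSym.at_neg_one hq'2,
          ZMod.χ₄_nat_three_mod_four hq'4, hleg1]
        ring
      exact ih q' hq'q hq'p hq'4 hlegq'

/-- Teege's theorem: for a prime `a ≡ 1 (mod 8)` the set of primes `β ≡ 3 (mod 4)`
with `(a/β) = -1` is infinite, and it contains a prime `β < a`. -/
theorem teege_theorem (a : ℕ) (ha : a.Prime) (ha8 : a % 8 = 1) :
    {β : ℕ | ∃ hβ : β.Prime, β % 4 = 3 ∧ @legendreSym β ⟨hβ⟩ (a : ℤ) = -1}.Infinite ∧
    ∃ β : ℕ, ∃ hβ : β.Prime, β % 4 = 3 ∧ @legendreSym β ⟨hβ⟩ (a : ℤ) = -1 ∧ β < a := by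
  haveI : Fact a.Prime := ⟨ha⟩
  have ha2 : a ≠ 2 := by omega
  have ha9 : 9 ≤ a := by
    have := ha.two_le
    have h1 : a ≠ 1 := by omega
    omega
  have ha4 : a % 4 = 1 := by omega
  -- a nonsquare mod a
  obtain ⟨b, hb⟩ := FiniteField.exists_nonsquare
    (F := ZMod a) (by rw [ZMod.ringChar_zmod_n]; exact ha2)
  have hb0 : b ≠ 0 := by
    rintro rfl
    exact hb ⟨0, by ring⟩
  have hbval0 : b.val ≠ 0 := fun h => hb0 (by rwa [ZMod.val_eq_zero] at h)
  have hbvallt : b.val < a := ZMod.val_lt b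
  -- the residue class mod 4a
  have h4a : Nat.Coprime 4 a := by
    rw [Nat.coprime_comm]
    refine (Nat.Prime.coprime_iff_not_dvd ha).mpr ?_
    intro hd
    have := Nat.le_of_dvd (by norm_num) hd
    omega
  obtain ⟨c₀, hc₀4, hc₀a⟩ := Nat.chineseRemainder h4a 3 b.val
  have hc₀4' : c₀ % 4 = 3 := by
    have := hc₀4
    unfold Nat.ModEq at this
    omega
  have hc₀a' : c₀ % a = b.val := by
    have h1 := hc₀a
    unfold Nat.ModEq at h1
    have h2 := Nat.mod_eq_of_lt hbvallt
    omega
  have hcop : Nat.Coprime c₀ (4 * a) := by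
    refine Nat.Coprime.mul_right ?_ ?_
    · have h2 : Nat.Coprime c₀ 2 := by
        rw [Nat.coprime_two_right, Nat.odd_iff]
        omega
      have := h2.mul_right h2
      simpa using this
    · rw [Nat.coprime_comm]
      refine (Nat.Prime.coprime_iff_not_dvd ha).mpr ?_
      intro hd
      obtain ⟨k, rfl⟩ := hd
      have := Nat.mul_mod_right a k
      omega
  haveI : NeZero (4 * a) := ⟨by positivity⟩
  have hcunit : IsUnit ((c₀ : ℕ) : ZMod (4 * a)) :=
    (ZMod.isUnit_iff_coprime c₀ (4 * a)).mpr hcop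
  have hinf := Nat.infinite_setOfPred_prime_and_eq_mod hcunit
  have hsub : {p : ℕ | p.Prime ∧ (p : ZMod (4 * a)) = ((c₀ : ℕ) : ZMod (4 * a))} ⊆
      {β : ℕ | ∃ hβ : β.Prime, β % 4 = 3 ∧ @legendreSym β ⟨hβ⟩ (a : ℤ) = -1} := by
    rintro p ⟨hp, hpc⟩
    have hmod : p ≡ c₀ [MOD 4 * a] := (ZMod.natCast_eq_natCast_iff p c₀ (4 * a)).mp hpc
    have hp4 : p % 4 = 3 := by
      have h4 : p ≡ c₀ [MOD 4] := hmod.of_dvd (dvd_mul_right 4 a)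
      unfold Nat.ModEq at h4
      omega
    have hpa : (p : ZMod a) = b := by
      have hma : p ≡ c₀ [MOD a] := hmod.of_dvd (dvd_mul_left a 4)
      have h1 : (p : ZMod a) = ((c₀ : ℕ) : ZMod a) :=
        (ZMod.natCast_eq_natCast_iff _ _ _).mpr hma
      have h2 : ((c₀ : ℕ) : ZMod a) = ((b.val : ℕ) : ZMod a) :=
        (ZMod.natCast_eq_natCast_iff _ _ _).mpr hc₀a
      rw [h1, h2, ZMod.natCast_rightInverse b]
    haveI : Fact p.Prime := ⟨hp⟩
    have hp2 : p ≠ 2 := by omega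
    have hlegap : @legendreSym a ⟨ha⟩ (p : ℤ) = -1 := by
      rw [legendreSym.eq_neg_one_iff]
      intro hsq
      apply hb
      have hcast : (((p : ℤ)) : ZMod a) = (p : ZMod a) := by push_cast; ring
      rwa [hcast, hpa] at hsq
    have hlegpa : @legendreSym p ⟨hp⟩ (a : ℤ) = -1 := by
      rw [legendreSym.quadratic_reciprocity_one_mod_four ha4 hp2]
      exact hlegap
    exact ⟨hp, hp4, hlegpa⟩
  constructor
  · exact hinf.mono hsub
  · obtain ⟨p₀, hp₀⟩ := hinf.nonempty
    obtain ⟨hp₀p, hp₀4, hp₀leg⟩ := hsub hp₀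
    exact teege_descent a ha ha8 p₀ hp₀p hp₀4 hp₀leg
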